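/- Let G be a graph admitting a good decomposition (I, C, R). Then G has a P3-packing of size k if and only if G[R] has a P3-packing of size k − |C|. -/
import Mathlib


open Finset

variable {V : Type*}

/-- vertex set of an (ordered) 3-path -/
def TripSet [DecidableEq V] (t : V × V × V) : Finset V := {t.1, t.2.1, t.2.2}

/-- a P3-packing: a collection of vertex-disjoint paths on three vertices -/
def IsP3Packing [DecidableEq V] (G : SimpleGraph V) (P : Finset (V × V × V)) : Prop :=
  (∀ t ∈ P, G.Adj t.1 t.2.1 ∧ G.Adj t.2.1 t.2.2 ∧ t.1 ≠ t.2.2) ∧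
  (∀ t ∈ P, ∀ s ∈ P, t ≠ s → Disjoint (TripSet t) (TripSet s))

/-- `D` is a 3-path vertex cover of the induced subgraph `G[S]` -/
def IsP3VCOn (G : SimpleGraph V) (S D : Finset V) : Prop :=
  ∀ a b c : V, a ∈ S → b ∈ S → c ∈ S → G.Adj a b → G.Adj b c → a ≠ c →
    a ∈ D ∨ b ∈ D ∨ c ∈ D

def IsP3VC (G : SimpleGraph V) (C : Finset V) : Prop :=
  ∀ a b c : V, G.Adj a b → G.Adj b c → a ≠ c → a ∈ C ∨ b ∈ C ∨ c ∈ C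

def NSet [Fintype V] [DecidableEq V] (G : SimpleGraph V) [DecidableRel G.Adj]
    (S : Finset V) : Finset V :=
  Finset.univ.filter (fun w => w ∉ S ∧ ∃ x ∈ S, G.Adj w x)

/-- a good decomposition `(I, C, R)` of `G` -/
def IsGoodDecomp [Fintype V] [DecidableEq V] (G : SimpleGraph V) [DecidableRel G.Adj]
    (I C R : Finset V) : Prop :=
  (I ∪ C ∪ R = Finset.univ) ∧ Disjoint I C ∧ Disjoint I R ∧ Disjoint C R ∧
  (∀ a ∈ I, (I.filter (fun b => G.Adj a b)).card ≤ 1) ∧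
  (∃ P : Finset (V × V × V), IsP3Packing G P ∧ (∀ t ∈ P, TripSet t ⊆ I ∪ C) ∧
    P.card = C.card) ∧
  (∀ a ∈ I, ∀ b ∈ R, ¬ G.Adj a b)

lemma packing_subset [DecidableEq V] {G : SimpleGraph V} {P P' : Finset (V × V × V)}
    (h : IsP3Packing G P) (hs : P' ⊆ P) : IsP3Packing G P' :=
  ⟨fun t ht => h.1 t (hs ht), fun t ht s hs' hne => h.2 t (hs ht) s (hs hs') hne⟩

/-- for a good decomposition `(I, C, R)` of `G`, `G` has a
P3-packing of size `k` iff `G[R]` has a P3-packing of size `k - |C|`. -/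
theorem stmt7 [Fintype V] [DecidableEq V] (G : SimpleGraph V) [DecidableRel G.Adj]
    (I C R : Finset V) (h : IsGoodDecomp G I C R) (k : ℕ) :
    (∃ P : Finset (V × V × V), IsP3Packing G P ∧ P.card = k) ↔
    (∃ P' : Finset (V × V × V), IsP3Packing G P' ∧ (∀ t ∈ P', TripSet t ⊆ R) ∧
      P'.card = k - C.card) := by
  classical
  obtain ⟨hU, hIC, hIR, hCR, hdeg, ⟨Q, hQpack, hQsub, hQcard⟩, hno⟩ := h
  constructor
  · rintro ⟨P, hP, rfl⟩
    set S := P.filter (fun t => TripSet t ⊆ R) with hSdef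
    have hSsub : S ⊆ P := filter_subset _ _
    have hkey : ∀ t ∈ P \ S, (TripSet t ∩ C).Nonempty := by
      rintro ⟨a, b, c⟩ ht
      rw [mem_sdiff] at ht
      obtain ⟨htP, htS⟩ := ht
      obtain ⟨hab, hbc, hac⟩ := hP.1 _ htP
      simp only at hab hbc hac
      by_contra hcon
      rw [Finset.not_nonempty_iff_eq_empty, ← Finset.disjoint_iff_inter_eq_empty] at hcon
      have hnotC : ∀ v ∈ TripSet ((a, b, c) : V × V × V), v ∉ C :=
        fun v hv => Finset.disjoint_left.mp hcon hv
      have hmem : ∀ v ∈ TripSet ((a, b, c) : V × V × V), v ∈ I ∨ v ∈ R := by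
        intro v hv
        have hu : v ∈ I ∪ C ∪ R := by rw [hU]; exact mem_univ v
        rcases mem_union.mp hu with hu | hu
        · rcases mem_union.mp hu with hu | hu
          · exact Or.inl hu
          · exact absurd hu (hnotC v hv)
        · exact Or.inr hu
      have haT : a ∈ TripSet ((a, b, c) : V × V × V) := by simp [TripSet]
      have hbT : b ∈ TripSet ((a, b, c) : V × V × V) := by simp [TripSet]
      have hcT : c ∈ TripSet ((a, b, c) : V × V × V) := by simp [TripSet]
      rcases hmem b hbT with hbI | hbR
      · -- b ∈ I, so a, c ∈ I, contradicting degree bound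
        have haI : a ∈ I := by
          rcases hmem a haT with h' | h'
          · exact h'
          · exact absurd hab.symm (hno b hbI a h')
        have hcI : c ∈ I := by
          rcases hmem c hcT with h' | h'
          · exact h'
          · exact absurd hbc (hno b hbI c h')
        have hsub2 : ({a, c} : Finset V) ⊆ I.filter (fun x => G.Adj b x) := by
          intro x hx
          rcases Finset.mem_insert.mp hx with rfl | hx
          · exact mem_filter.mpr ⟨haI, hab.symm⟩
          · rw [Finset.mem_singleton] at hx
            subst hx
            exact mem_filter.mpr ⟨hcI, hbc⟩
        have h2 : 2 ≤ (I.filter (fun x => G.Adj b x)).card := by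
          calc 2 = ({a, c} : Finset V).card := by rw [Finset.card_insert_of_notMem (by simpa using hac), Finset.card_singleton]
          _ ≤ _ := Finset.card_le_card hsub2
        exact absurd (hdeg b hbI) (by omega)
      · -- b ∈ R, so a, c ∈ R, contradicting t ∉ S
        have haR : a ∈ R := by
          rcases hmem a haT with h' | h'
          · exact absurd hab (hno a h' b hbR)
          · exact h'
        have hcR : c ∈ R := by
          rcases hmem c hcT with h' | h'
          · exact absurd hbc.symm (hno c h' b hbR)
          · exact h'
        apply htS
        rw [hSdef, mem_filter]
        refine ⟨htP, ?_⟩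
        intro v hv
        simp only [TripSet, mem_insert, mem_singleton] at hv
        rcases hv with rfl | rfl | rfl
        exacts [haR, hbR, hcR]
    -- injective map from P \ S into C
    have hcardPS : (P \ S).card ≤ C.card := by
      apply Finset.card_le_card_of_injOn
        (fun t => if h : (TripSet t ∩ C).Nonempty then h.choose else t.1)
      · intro t ht
        have h' := hkey t ht
        simp only [dif_pos h']
        exact (Finset.mem_inter.mp h'.choose_spec).2
      · intro t ht s hs heq
        have ht' := hkey t (by simpa using ht)
        have hs' := hkey s (by simpa using hs)
        simp only [dif_pos ht', dif_pos hs'] at heq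
        by_contra hne
        have hd := hP.2 t (mem_sdiff.mp (by simpa using ht)).1 s
          (mem_sdiff.mp (by simpa using hs)).1 hne
        have h1 : ht'.choose ∈ TripSet t := (Finset.mem_inter.mp ht'.choose_spec).1
        have h2 : hs'.choose ∈ TripSet s := (Finset.mem_inter.mp hs'.choose_spec).1
        rw [heq] at h1
        exact Finset.disjoint_left.mp hd h1 h2
    have hsplit : (P \ S).card + S.card = P.card :=
      Finset.card_sdiff_add_card_eq_card hSsub
    have hle : P.card - C.card ≤ S.card := by omega
    obtain ⟨T, hTsub, hTcard⟩ := Finset.exists_subset_card_eq hle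
    refine ⟨T, packing_subset hP (hTsub.trans hSsub), ?_, hTcard⟩
    intro t ht
    exact (mem_filter.mp (hTsub ht)).2
  · rintro ⟨P', hP', hPR, hcard⟩
    have hdICR : Disjoint (I ∪ C) R := Finset.disjoint_union_left.mpr ⟨hIR, hCR⟩
    have hPQ : Disjoint P' Q := by
      rw [Finset.disjoint_left]
      intro t htP htQ
      have h1 : t.1 ∈ R := hPR t htP (by simp [TripSet])
      have h2 : t.1 ∈ I ∪ C := hQsub t htQ (by simp [TripSet])
      exact Finset.disjoint_left.mp hdICR h2 h1
    have hUpack : IsP3Packing G (P' ∪ Q) := by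
      constructor
      · intro t ht
        rcases mem_union.mp ht with h' | h'
        exacts [hP'.1 t h', hQpack.1 t h']
      · intro t ht s hs hne
        rcases mem_union.mp ht with h1 | h1 <;> rcases mem_union.mp hs with h2 | h2
        · exact hP'.2 t h1 s h2 hne
        · exact Finset.disjoint_of_subset_left (hPR t h1)
            (Finset.disjoint_of_subset_right (hQsub s h2) hdICR.symm)
        · exact Finset.disjoint_of_subset_left (hQsub t h1)
            (Finset.disjoint_of_subset_right (hPR s h2) hdICR)
        · exact hQpack.2 t h1 s h2 hne
    have hcardU : (P' ∪ Q).card = (k - C.card) + C.card := by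
      rw [Finset.card_union_of_disjoint hPQ, hcard, hQcard]
    have hk : k ≤ (P' ∪ Q).card := by omega
    obtain ⟨T, hTsub, hTcard⟩ := Finset.exists_subset_card_eq hk
    exact ⟨T, packing_subset hUpack hTsub, hTcard⟩
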